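/- For any graph G, the chromatic number of G is at most the dynamic chromatic number of the 2-subdivision of G. (The 2-subdivision G* is obtained from G by replacing each edge uv with a path u-w-v through a new vertex w; a dynamic coloring is a proper coloring in which every vertex of degree at least 2 sees at least two distinct colors in its neighborhood.) -/

import Mathlib

open Finset

open scoped Classical in
noncomputable def deg {V : Type*} [Fintype V] (G : SimpleGraph V) (v : V) : ℕ :=
  (Finset.univ.filter (fun u => G.Adj v u)).card

def IsProper {V : Type*} (G : SimpleGraph V) (c : V → ℕ) : Prop :=
  ∀ u v, G.Adj u v → c u ≠ c v

def IsDynamic {V : Type*} [Fintype V] (G : SimpleGraph V) (c : V → ℕ) : Prop :=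
  IsProper G c ∧ ∀ v, 2 ≤ deg G v → ∃ a b, G.Adj v a ∧ G.Adj v b ∧ c a ≠ c b

noncomputable def chrom {V : Type*} (G : SimpleGraph V) : ℕ :=
  sInf {n | ∃ c : V → ℕ, (∀ v, c v < n) ∧ IsProper G c}

noncomputable def dynChrom {V : Type*} [Fintype V] (G : SimpleGraph V) : ℕ :=
  sInf {n | ∃ c : V → ℕ, (∀ v, c v < n) ∧ IsDynamic G c}

def subdiv {V : Type*} (G : SimpleGraph V) : SimpleGraph (V ⊕ G.edgeSet) where
  Adj x y :=
    match x, y with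
    | Sum.inl u, Sum.inr e => u ∈ (e : Sym2 V)
    | Sum.inr e, Sum.inl u => u ∈ (e : Sym2 V)
    | _, _ => False
  symm := ⟨by rintro (u | e) (v | f) h <;> first | exact h | exact h.elim⟩
  loopless := ⟨by rintro (u | e) h <;> exact h⟩

noncomputable instance {V : Type*} [Fintype V] (G : SimpleGraph V) : Fintype G.edgeSet :=
  Fintype.ofFinite _

theorem chrom_le_dynChrom_subdiv {V : Type*} [Fintype V] [DecidableEq V]
    (G : SimpleGraph V) : chrom G ≤ dynChrom (subdiv G) := by
  classical
  have hne : {n | ∃ c : V ⊕ G.edgeSet → ℕ, (∀ v, c v < n) ∧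
      IsDynamic (subdiv G) c}.Nonempty := by
    refine ⟨Fintype.card (V ⊕ G.edgeSet),
      fun x => (Fintype.equivFin _ x : ℕ),
      fun v => (Fintype.equivFin _ v).isLt, ?_, ?_⟩
    · intro u v h hc
      exact (subdiv G).ne_of_adj h ((Fintype.equivFin _).injective (Fin.ext hc))
    · intro v hv
      rw [deg] at hv
      obtain ⟨a, ha, b, hb, hab⟩ := Finset.one_lt_card.mp hv
      refine ⟨a, b, (Finset.mem_filter.mp ha).2, (Finset.mem_filter.mp hb).2, ?_⟩
      intro hc
      exact hab ((Fintype.equivFin _).injective (Fin.ext hc))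
  obtain ⟨c, hbound, hproper, hdyn⟩ := Nat.sInf_mem hne
  apply Nat.sInf_le
  refine ⟨fun v => c (Sum.inl v), fun v => hbound _, ?_⟩
  intro u v huv
  set e : G.edgeSet := ⟨s(u, v), huv⟩ with he
  have hau : (subdiv G).Adj (Sum.inr e) (Sum.inl u) := by
    show u ∈ (e : Sym2 V); simp [he]
  have hav : (subdiv G).Adj (Sum.inr e) (Sum.inl v) := by
    show v ∈ (e : Sym2 V); simp [he]
  have hdeg : 2 ≤ deg (subdiv G) (Sum.inr e) := by
    rw [deg]
    refine Finset.one_lt_card.mpr ⟨Sum.inl u, ?_, Sum.inl v, ?_, ?_⟩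
    · exact Finset.mem_filter.mpr ⟨Finset.mem_univ _, hau⟩
    · exact Finset.mem_filter.mpr ⟨Finset.mem_univ _, hav⟩
    · simp [G.ne_of_adj huv]
  obtain ⟨a, b, ha, hb, hab⟩ := hdyn (Sum.inr e) hdeg
  rcases a with w | f; swap
  · exact ha.elim
  rcases b with x | f; swap
  · exact hb.elim
  have hw : w = u ∨ w = v := by
    have : w ∈ (e : Sym2 V) := ha
    simpa [he, Sym2.mem_iff] using this
  have hx : x = u ∨ x = v := by
    have : x ∈ (e : Sym2 V) := hb
    simpa [he, Sym2.mem_iff] using this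
  rcases hw with rfl | rfl <;> rcases hx with rfl | rfl
  · exact (hab rfl).elim
  · exact hab
  · exact fun h => hab h.symm
  · exact (hab rfl).elim
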